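/- Let X be a Banach space and f : X → ℝ∪{+∞} with ∂f maximal monotone. Then D(∂f) is norm-dense in dom f. -/

import Mathlib

open scoped Topology

section Defs

variable {X : Type*} [AddCommGroup X] [Module ℝ X] [TopologicalSpace X]

/-- `p ∈ ∂f(x)`: `f x` is finite and `f y ≥ f x + ⟨y - x, p⟩` for all `y`. -/
def IsSubgrad (f : X → EReal) (x : X) (p : X →L[ℝ] ℝ) : Prop :=
  f x ≠ ⊤ ∧ f x ≠ ⊥ ∧ ∀ y, f x + (p (y - x) : EReal) ≤ f y

/-- Graph of the convex subdifferential of `f`. -/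
def graphSub (f : X → EReal) : Set (X × (X →L[ℝ] ℝ)) :=
  {q | IsSubgrad f q.1 q.2}

/-- Domain `D(∂f)` of the subdifferential. -/
def subdiffDom (f : X → EReal) : Set X := {x | ∃ p, IsSubgrad f x p}

/-- Range `R(∂f)` of the subdifferential. -/
def subdiffRan (f : X → EReal) : Set (X →L[ℝ] ℝ) := {p | ∃ x, IsSubgrad f x p}

/-- Monotone subset of `X × X*`. -/
def MonotoneSet (S : Set (X × (X →L[ℝ] ℝ))) : Prop :=
  ∀ a ∈ S, ∀ b ∈ S, 0 ≤ a.2 (a.1 - b.1) - b.2 (a.1 - b.1)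

/-- Maximal monotone subset of `X × X*` (maximal w.r.t. graph inclusion). -/
def MaxMonotoneSet (S : Set (X × (X →L[ℝ] ℝ))) : Prop :=
  MonotoneSet S ∧ ∀ T, MonotoneSet T → S ⊆ T → T = S

/-- Proper function: never `−∞` and not identically `+∞`. -/
def ProperE {Y : Type*} (f : Y → EReal) : Prop :=
  (∃ x, f x ≠ ⊤) ∧ ∀ x, f x ≠ ⊥

/-- Convexity of an extended-real-valued function via its epigraph. -/
def ConvexEpi (f : X → EReal) : Prop :=
  Convex ℝ {q : X × ℝ | f q.1 ≤ (q.2 : EReal)}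

/-- The lsc convex hull: the greatest lsc convex function majorized by `f`. -/
noncomputable def lscConvHull (f : X → EReal) : X → EReal := fun x =>
  sSup {v | ∃ g : X → EReal, ConvexEpi g ∧ LowerSemicontinuous g ∧ g ≤ f ∧ v = g x}

/-- Convex conjugate w.r.t. the dual system `(X, X*)`. -/
noncomputable def conjE (f : X → EReal) (p : X →L[ℝ] ℝ) : EReal :=
  ⨆ x, ((p x : EReal) - f x)

/-- Biconjugate `f**`. -/
noncomputable def biconjE (f : X → EReal) (x : X) : EReal :=
  ⨆ p : X →L[ℝ] ℝ, ((p x : EReal) - conjE f p)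

/-- Fitzpatrick function of `∂f`. -/
noncomputable def fitzSub (f : X → EReal) (x : X) (p : X →L[ℝ] ℝ) : EReal :=
  ⨆ a, ⨆ s, ⨆ _ : IsSubgrad f a s, ((s (x - a) + p a : ℝ) : EReal)

/-- Upper envelope `f^∪(x) = sup{⟨x−a, a*⟩ + f(a) : (a,a*) ∈ Graph ∂f}`. -/
noncomputable def upperEnv (f : X → EReal) (x : X) : EReal :=
  ⨆ a, ⨆ s, ⨆ _ : IsSubgrad f a s, ((s (x - a) : EReal) + f a)

end Defs





private lemma ekeland_real {Y : Type*} [MetricSpace Y] [CompleteSpace Y] [Nonempty Y]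
    (F : Y → ℝ) (hF : LowerSemicontinuous F) (c : ℝ) (hc : ∀ y, c ≤ F y)
    (ε : ℝ) (hε : 0 < ε) (x0 : Y) :
    ∃ v, F v + ε * dist v x0 ≤ F x0 ∧ ∀ y, F v ≤ F y + ε * dist y v := by
  classical
  set S : Y → Set Y := fun x => {y | F y + ε * dist y x ≤ F x} with hS
  have hmem : ∀ x, x ∈ S x := by intro x; simp [hS]
  have htrans : ∀ x y, y ∈ S x → S y ⊆ S x := by
    intro x y hy z hz
    have h1 : F z + ε * dist z y ≤ F y := hz
    have h2 : F y + ε * dist y x ≤ F x := hy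
    have : dist z x ≤ dist z y + dist y x := dist_triangle z y x
    simp only [hS, Set.mem_setOf_eq]
    nlinarith
  have hbdd : ∀ x, BddBelow (F '' S x) := by
    intro x; exact ⟨c, by rintro r ⟨y, -, rfl⟩; exact hc y⟩
  have hex : ∀ (n : ℕ) (x : Y), ∃ y, y ∈ S x ∧ F y ≤ sInf (F '' S x) + (1/2) ^ n := by
    intro n x
    have hne : (F '' S x).Nonempty := ⟨F x, x, hmem x, rfl⟩
    have : sInf (F '' S x) < sInf (F '' S x) + (1/2) ^ n :=
      lt_add_of_pos_right _ (by positivity)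
    obtain ⟨r, ⟨y, hy, rfl⟩, hr⟩ := exists_lt_of_csInf_lt hne this
    exact ⟨y, hy, hr.le⟩
  choose next hnext1 hnext2 using hex
  set u : ℕ → Y := fun n => Nat.rec x0 (fun n ih => next n ih) n with hu
  have hu0 : u 0 = x0 := rfl
  have husucc : ∀ n, u (n+1) = next n (u n) := fun n => rfl
  have hstep : ∀ n, u (n+1) ∈ S (u n) := fun n => hnext1 n (u n)
  have hchain : ∀ n m, n ≤ m → u m ∈ S (u n) := by
    intro n m hnm
    induction m with
    | zero => simp_all [Nat.le_zero.mp hnm, hmem]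
    | succ m ih =>
      rcases Nat.lt_or_ge n (m+1) with h | h
      · exact htrans _ _ (ih (Nat.lt_succ_iff.mp h)) (hstep m)
      · have : n = m + 1 := le_antisymm hnm h
        subst this; exact hmem _
  have hFanti : ∀ n m, n ≤ m → F (u m) ≤ F (u n) := by
    intro n m hnm
    have := hchain n m hnm
    have h1 : F (u m) + ε * dist (u m) (u n) ≤ F (u n) := this
    nlinarith [dist_nonneg (x := u m) (y := u n)]
  -- limit of F (u n)
  set L : ℝ := ⨅ n, F (u (n : ℕ)) with hL
  have hFbdd : BddBelow (Set.range fun n => F (u n)) := ⟨c, by rintro r ⟨n, rfl⟩; exact hc _⟩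
  have hLlim : Filter.Tendsto (fun n => F (u n)) Filter.atTop (𝓝 L) :=
    tendsto_atTop_ciInf (fun n m hnm => hFanti n m hnm) hFbdd
  have hLle : ∀ n, L ≤ F (u n) := fun n => ciInf_le hFbdd n
  -- Cauchy
  have hdist : ∀ n m, n ≤ m → ε * dist (u m) (u n) ≤ F (u n) - F (u m) := by
    intro n m hnm
    have := hchain n m hnm
    have h1 : F (u m) + ε * dist (u m) (u n) ≤ F (u n) := this
    linarith
  have hcauchy : CauchySeq u := by
    apply cauchySeq_of_le_tendsto_0 (fun n => 2 * (F (u n) - L) / ε)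
    · intro n m N hNn hNm
      have h1 := hdist N n hNn
      have h2 := hdist N m hNm
      have h3 : dist (u n) (u m) ≤ dist (u n) (u N) + dist (u m) (u N) := by
        rw [dist_comm (u m) (u N)]; exact dist_triangle _ _ _
      have h4 := hLle n
      have h5 := hLle m
      rw [le_div_iff₀ hε]
      have h3' : dist (u n) (u m) * ε ≤ (dist (u n) (u N) + dist (u m) (u N)) * ε := by
        nlinarith
      nlinarith
    · have : Filter.Tendsto (fun n => F (u n) - L) Filter.atTop (𝓝 (L - L)) :=
        hLlim.sub (tendsto_const_nhds (x := L))
      rw [sub_self] at this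
      have := (this.const_mul 2).div_const ε
      simpa [mul_div_assoc] using this
  obtain ⟨v, hv⟩ := cauchySeq_tendsto_of_complete hcauchy
  -- F v ≤ L
  have hFvL : F v ≤ L := by
    refine le_of_forall_lt fun c' hc' => ?_
    obtain ⟨c'', h1, h2⟩ := exists_between hc'
    have hev : ∀ᶠ n in Filter.atTop, c'' < F (u n) := hv.eventually (hF v c'' h2)
    have : c'' ≤ L := ge_of_tendsto hLlim (hev.mono fun n h => h.le)
    exact lt_of_lt_of_le h1 this
  -- v ∈ S (u n) for all n
  have hvS : ∀ n, v ∈ S (u n) := by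
    intro n
    have hdc : Filter.Tendsto (fun m => F (u m) + ε * dist (u m) (u n))
        Filter.atTop (𝓝 (L + ε * dist v (u n))) :=
      hLlim.add (((hv.dist tendsto_const_nhds).const_mul ε))
    have hle : L + ε * dist v (u n) ≤ F (u n) := by
      refine le_of_tendsto hdc ?_
      filter_upwards [Filter.eventually_ge_atTop n] with m hm
      exact hchain n m hm
    have : F v + ε * dist v (u n) ≤ F (u n) := by linarith
    exact this
  refine ⟨v, ?_, ?_⟩
  · have := hvS 0; rw [hu0] at this; exact this
  · intro y
    by_contra hy
    push_neg at hy
    have hyS : ∀ n, y ∈ S (u n) := by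
      intro n
      refine htrans _ _ (hvS n) ?_
      have : F y + ε * dist y v ≤ F v := hy.le
      exact this
    have hkey : ∀ n : ℕ, F (u (n+1)) ≤ F y + (1/2) ^ n := by
      intro n
      calc F (u (n+1)) ≤ sInf (F '' S (u n)) + (1/2)^n := hnext2 n (u n)
        _ ≤ F y + (1/2)^n := by
            gcongr
            exact csInf_le (hbdd _) ⟨y, hyS n, rfl⟩
    have hLy : L ≤ F y := by
      have h1 : Filter.Tendsto (fun n : ℕ => F (u (n+1))) Filter.atTop (𝓝 L) :=
        hLlim.comp (Filter.tendsto_add_atTop_nat 1)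
      have h2 : Filter.Tendsto (fun n : ℕ => F y + (1/2:ℝ)^n) Filter.atTop (𝓝 (F y + 0)) :=
        tendsto_const_nhds.add (tendsto_pow_atTop_nhds_zero_of_lt_one (by norm_num) (by norm_num))
      have := le_of_tendsto_of_tendsto' h1 h2 hkey
      simpa using this
    have : F v ≤ F y := hFvL.trans hLy
    have hd : (0:ℝ) ≤ ε * dist y v := by positivity
    linarith




private lemma ereal_iSup_add_coe {ι : Type*} [Nonempty ι] (u : ι → ℝ) (c : ℝ) :
    (⨆ i, ((u i : EReal))) + (c : EReal) = ⨆ i, ((u i + c : ℝ) : EReal) := by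
  refine le_antisymm ?_ (iSup_le fun i => ?_)
  · have h1 : (⨆ i, ((u i : EReal))) ≤ (⨆ i, ((u i + c : ℝ) : EReal)) + ((-c : ℝ) : EReal) := by
      refine iSup_le fun i => ?_
      have : ((u i : ℝ) : EReal) = ((u i + c : ℝ) : EReal) + ((-c : ℝ) : EReal) := by
        rw [← EReal.coe_add]; norm_num
      rw [this]
      exact add_le_add (le_iSup (fun i => ((u i + c : ℝ) : EReal)) i) le_rfl
    calc (⨆ i, ((u i : EReal))) + (c : EReal)
        ≤ ((⨆ i, ((u i + c : ℝ) : EReal)) + ((-c : ℝ) : EReal)) + (c : EReal) :=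
          add_le_add h1 le_rfl
      _ = ⨆ i, ((u i + c : ℝ) : EReal) := by
          rw [add_assoc, ← EReal.coe_add]; norm_num
  · have : ((u i + c : ℝ) : EReal) = ((u i : ℝ) : EReal) + (c : EReal) := EReal.coe_add _ _
    rw [this]
    exact add_le_add (le_iSup (fun i => ((u i : ℝ) : EReal)) i) le_rfl

private lemma sup_affine_subdiff_dense {X : Type*} [NormedAddCommGroup X] [NormedSpace ℝ X]
    [CompleteSpace X] {ι : Type*} [Nonempty ι] (φ : ι → X →L[ℝ] ℝ) (r : ι → ℝ)
    (g : X → EReal) (hg : ∀ y, g y = ⨆ i, ((φ i y + r i : ℝ) : EReal))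
    (x0 : X) (hx0 : g x0 ≠ ⊤) (δ : ℝ) (hδ : 0 < δ) :
    ∃ v p, IsSubgrad g v p ∧ dist x0 v < δ := by
  classical
  obtain ⟨i0⟩ := ‹Nonempty ι›
  set F : X → EReal := fun y => ⨆ i, (((φ i y + r i) + (-(φ i0 y) - r i0) : ℝ) : EReal) with hF
  have hFg : ∀ y, F y = g y + ((-(φ i0 y) - r i0 : ℝ) : EReal) := by
    intro y
    rw [hg y, ereal_iSup_add_coe (fun i => φ i y + r i) (-(φ i0 y) - r i0)]
  have hgF : ∀ y, g y = F y + ((φ i0 y + r i0 : ℝ) : EReal) := by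
    intro y
    rw [hFg y, add_assoc, ← EReal.coe_add]
    norm_num
  have hF0 : ∀ y, (0 : EReal) ≤ F y := by
    intro y
    have : (((φ i0 y + r i0) + (-(φ i0 y) - r i0) : ℝ) : EReal) ≤ F y :=
      le_iSup (fun i => (((φ i y + r i) + (-(φ i0 y) - r i0) : ℝ) : EReal)) i0
    simpa using this
  have hFbot : ∀ y, F y ≠ ⊥ := fun y h => by simpa [h] using hF0 y
  have hFtop0 : F x0 ≠ ⊤ := by
    rw [hFg x0]
    exact (EReal.add_lt_top hx0 (EReal.coe_ne_top _)).ne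
  set r0 : ℝ := (F x0).toReal with hr0def
  have hFx0 : F x0 = (r0 : EReal) := (EReal.coe_toReal hFtop0 (hFbot x0)).symm
  have hr0nonneg : 0 ≤ r0 := by
    have := hF0 x0
    rw [hFx0] at this
    exact_mod_cast this
  set K : ℝ := r0 + 1 with hKdef
  have hr0K : r0 < K := by simp [hKdef]
  have hKpos : (0:ℝ) < K := by linarith
  -- convexity inequality for F
  have hconv : ∀ (y1 y2 : X) (b1 b2 a b : ℝ), 0 ≤ a → 0 ≤ b → a + b = 1 →
      F y1 ≤ (b1 : EReal) → F y2 ≤ (b2 : EReal) →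
      F (a • y1 + b • y2) ≤ ((a * b1 + b * b2 : ℝ) : EReal) := by
    intro y1 y2 b1 b2 a b ha hb hab h1 h2
    refine iSup_le fun i => ?_
    have t1 : (φ i y1 + r i) + (-(φ i0 y1) - r i0) ≤ b1 := by
      have := le_trans (le_iSup (fun i => (((φ i y1 + r i) + (-(φ i0 y1) - r i0) : ℝ) : EReal)) i) h1
      exact_mod_cast this
    have t2 : (φ i y2 + r i) + (-(φ i0 y2) - r i0) ≤ b2 := by
      have := le_trans (le_iSup (fun i => (((φ i y2 + r i) + (-(φ i0 y2) - r i0) : ℝ) : EReal)) i) h2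
      exact_mod_cast this
    have e1 : φ i (a • y1 + b • y2) = a * φ i y1 + b * φ i y2 := by
      rw [map_add, map_smul, map_smul]; rfl
    have e2 : φ i0 (a • y1 + b • y2) = a * φ i0 y1 + b * φ i0 y2 := by
      rw [map_add, map_smul, map_smul]; rfl
    rw [EReal.coe_le_coe_iff]
    have m1 := mul_le_mul_of_nonneg_left t1 ha
    have m2 := mul_le_mul_of_nonneg_left t2 hb
    rw [e1, e2]
    have hri : a * r i + b * r i = r i := by rw [← add_mul, hab, one_mul]
    have hri0 : a * r i0 + b * r i0 = r i0 := by rw [← add_mul, hab, one_mul]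
    nlinarith [m1, m2, hri, hri0]
  -- lower semicontinuity of F
  have hlsc : LowerSemicontinuous F := by
    refine lowerSemicontinuous_iSup fun i => Continuous.lowerSemicontinuous ?_
    exact continuous_coe_real_ereal.comp
      ((((φ i).continuous.add continuous_const).add
        (((φ i0).continuous.neg).sub continuous_const)))
  -- truncated real function
  set Ft : X → ℝ := fun y => (min (F y) ((K : ℝ) : EReal)).toReal with hFt
  have hminbot : ∀ y, min (F y) ((K : ℝ) : EReal) ≠ ⊥ := by
    intro y
    have : (0 : EReal) ≤ min (F y) ((K : ℝ) : EReal) :=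
      le_min (hF0 y) (by exact_mod_cast hKpos.le)
    intro h; rw [h] at this; simp at this
  have hmintop : ∀ y, min (F y) ((K : ℝ) : EReal) ≠ ⊤ := by
    intro y
    have : min (F y) ((K : ℝ) : EReal) ≤ ((K : ℝ) : EReal) := min_le_right _ _
    intro h; rw [h] at this; simp at this
  have hmin_coe : ∀ y, min (F y) ((K : ℝ) : EReal) = ((Ft y : ℝ) : EReal) :=
    fun y => (EReal.coe_toReal (hmintop y) (hminbot y)).symm
  have hFt_nonneg : ∀ y, 0 ≤ Ft y := by
    intro y
    have h := le_min (hF0 y) (by exact_mod_cast hKpos.le :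
      (0 : EReal) ≤ ((K : ℝ) : EReal))
    rw [hmin_coe y] at h
    exact_mod_cast h
  have hFt_leK : ∀ y, Ft y ≤ K := by
    intro y
    have h : min (F y) ((K : ℝ) : EReal) ≤ ((K : ℝ) : EReal) := min_le_right _ _
    rw [hmin_coe y] at h
    exact_mod_cast h
  have hFt_le_F : ∀ y, ((Ft y : ℝ) : EReal) ≤ F y := by
    intro y; rw [← hmin_coe y]; exact min_le_left _ _
  have hFtx0 : Ft x0 = r0 := by
    have : min (F x0) ((K : ℝ) : EReal) = ((r0 : ℝ) : EReal) := by
      rw [hFx0]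
      exact min_eq_left (by exact_mod_cast hr0K.le)
    rw [hFt]; simp only []
    rw [this]; exact EReal.toReal_coe r0
  have hFtlsc : LowerSemicontinuous Ft := by
    intro x c hc
    have hx1 : ((c : ℝ) : EReal) < min (F x) ((K : ℝ) : EReal) := by
      rw [hmin_coe x]; exact_mod_cast hc
    have hx2 : ((c : ℝ) : EReal) < F x := lt_of_lt_of_le hx1 (min_le_left _ _)
    have hcK : ((c : ℝ) : EReal) < ((K : ℝ) : EReal) := lt_of_lt_of_le hx1 (min_le_right _ _)
    filter_upwards [hlsc x c hx2] with y hy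
    have : ((c : ℝ) : EReal) < min (F y) ((K : ℝ) : EReal) := lt_min hy hcK
    rw [hmin_coe y] at this
    exact_mod_cast this
  -- Ekeland
  have : Nonempty X := ⟨0⟩
  obtain ⟨v, hv1, hv2⟩ := ekeland_real Ft hFtlsc 0 hFt_nonneg (K / δ) (by positivity) x0
  rw [hFtx0] at hv1
  set rv : ℝ := Ft v with hrv
  have hεd : 0 ≤ K / δ * dist v x0 := by positivity
  have hrv_le : rv ≤ r0 := by linarith [hv1]
  have hdist : dist x0 v < δ := by
    rw [dist_comm]
    have h1 : K / δ * dist v x0 ≤ r0 - rv := by linarith [hv1]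
    have h2 : K / δ * dist v x0 < K := by linarith [hFt_nonneg v, hr0K]
    calc dist v x0 = (K / δ * dist v x0) * (δ / K) := by field_simp
      _ < K * (δ / K) := by
          apply mul_lt_mul_of_pos_right h2; positivity
      _ = δ := by field_simp
  have hrvK : rv < K := by linarith [hFt_nonneg v]
  have hFv : F v = ((rv : ℝ) : EReal) := by
    rcases le_or_gt ((K : ℝ) : EReal) (F v) with h | h
    · exfalso
      have : min (F v) ((K : ℝ) : EReal) = ((K : ℝ) : EReal) := min_eq_right h
      rw [hmin_coe v] at this
      have : rv = K := by exact_mod_cast this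
      linarith
    · rw [← hmin_coe v]; exact (min_eq_left h.le).symm
  have hFvtop : F v ≠ ⊤ := by rw [hFv]; exact EReal.coe_ne_top _
  -- key lower bound
  set ε : ℝ := K / δ with hε
  have hεpos : 0 < ε := by positivity
  have hlow : ∀ y, ((rv - ε * ‖y - v‖ : ℝ) : EReal) ≤ F y := by
    intro y
    have h1 : rv ≤ Ft y + ε * dist y v := hv2 y
    rw [dist_eq_norm] at h1
    refine le_trans ?_ (hFt_le_F y)
    exact_mod_cast by linarith
  -- separation
  set Aset : Set (X × ℝ) := {q | F (v + q.1) ≤ ((rv + q.2 : ℝ) : EReal)} with hAset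
  set Bset : Set (X × ℝ) := {q | q.2 < -(ε * ‖q.1‖)} with hBset
  have hBopen : IsOpen Bset :=
    isOpen_lt continuous_snd ((continuous_const.mul (continuous_norm.comp continuous_fst)).neg)
  have hBconv : Convex ℝ Bset := by
    intro q1 h1 q2 h2 a b ha hb hab
    simp only [hBset, Set.mem_setOf_eq, Prod.smul_fst, Prod.smul_snd, Prod.fst_add,
      Prod.snd_add, smul_eq_mul] at *
    have hn : ‖a • q1.1 + b • q2.1‖ ≤ a * ‖q1.1‖ + b * ‖q2.1‖ := by
      calc ‖a • q1.1 + b • q2.1‖ ≤ ‖a • q1.1‖ + ‖b • q2.1‖ := norm_add_le _ _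
        _ = a * ‖q1.1‖ + b * ‖q2.1‖ := by
            rw [norm_smul, norm_smul, Real.norm_eq_abs, Real.norm_eq_abs,
              abs_of_nonneg ha, abs_of_nonneg hb]
    rcases ha.eq_or_lt with rfl | ha'
    · simp only [zero_mul, zero_add, zero_smul] at *
      have hb1 : b = 1 := by linarith
      rw [hb1] at *
      simp only [one_mul, one_smul] at *
      exact h2
    · have m1 : a * q1.2 < a * (-(ε * ‖q1.1‖)) := by
        exact mul_lt_mul_of_pos_left h1 ha'
      have m2 : b * q2.2 ≤ b * (-(ε * ‖q2.1‖)) := mul_le_mul_of_nonneg_left h2.le hb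
      nlinarith
  have hAconv : Convex ℝ Aset := by
    intro q1 h1 q2 h2 a b ha hb hab
    simp only [hAset, Set.mem_setOf_eq, Prod.smul_fst, Prod.smul_snd, Prod.fst_add,
      Prod.snd_add, smul_eq_mul] at *
    have hvw : v + (a • q1.1 + b • q2.1) = a • (v + q1.1) + b • (v + q2.1) := by
      rw [smul_add, smul_add]
      rw [show a • v + a • q1.1 + (b • v + b • q2.1)
        = (a • v + b • v) + (a • q1.1 + b • q2.1) by abel]
      rw [← add_smul, hab, one_smul]
    rw [hvw]
    have := hconv (v + q1.1) (v + q2.1) (rv + q1.2) (rv + q2.2) a b ha hb hab h1 h2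
    refine le_trans this ?_
    rw [EReal.coe_le_coe_iff]
    nlinarith [hab]
  have hdisj : Disjoint Bset Aset := by
    rw [Set.disjoint_left]
    rintro ⟨w, t⟩ hB hA
    simp only [hBset, Set.mem_setOf_eq] at hB
    simp only [hAset, Set.mem_setOf_eq] at hA
    have h1 := hlow (v + w)
    rw [show v + w - v = w by abel] at h1
    have h2 : ((rv - ε * ‖w‖ : ℝ) : EReal) ≤ ((rv + t : ℝ) : EReal) := le_trans h1 hA
    rw [EReal.coe_le_coe_iff] at h2
    linarith
  obtain ⟨Φ, u, hBu, hAu⟩ := geometric_hahn_banach_open hBconv hBopen hAconv hdisj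
  set β : ℝ := Φ (0, 1) with hβdef
  have hsplit : ∀ (w : X) (t : ℝ), Φ (w, t) = Φ (w, 0) + t * β := by
    intro w t
    have : (w, t) = (w, (0:ℝ)) + t • ((0:X), (1:ℝ)) := by
      ext <;> simp
    rw [this, map_add, map_smul]; rfl
  have hmemA0 : ((0 : X), (0 : ℝ)) ∈ Aset := by
    simp only [hAset, Set.mem_setOf_eq, add_zero]
    rw [hFv]
  have hu0 : u ≤ 0 := by
    have := hAu _ hmemA0
    rw [show ((0:X),(0:ℝ)) = (0 : X × ℝ) from rfl, map_zero] at this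
    exact this
  have hβpos : 0 < β := by
    have hmemB : ((0 : X), (-1 : ℝ)) ∈ Bset := by
      simp [hBset]
    have h := hBu _ hmemB
    rw [hsplit 0 (-1), show ((0:X),(0:ℝ)) = (0 : X × ℝ) from rfl, map_zero] at h
    simp only [zero_add, neg_one_mul] at h
    linarith
  have hu_nonneg : 0 ≤ u := by
    by_contra h
    push_neg at h
    have hmemB : ((0 : X), u / β) ∈ Bset := by
      simp only [hBset, Set.mem_setOf_eq, norm_zero, mul_zero, neg_zero]
      exact div_neg_of_neg_of_pos h hβpos
    have hb := hBu _ hmemB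
    rw [hsplit 0 (u / β), show ((0:X),(0:ℝ)) = (0 : X × ℝ) from rfl, map_zero,
      zero_add, div_mul_cancel₀ _ hβpos.ne'] at hb
    exact lt_irrefl _ hb
  set ψ : X →L[ℝ] ℝ := Φ.comp (ContinuousLinearMap.inl ℝ X ℝ) with hψ
  have hψapp : ∀ w : X, ψ w = Φ (w, 0) := fun w => rfl
  set p : X →L[ℝ] ℝ := (-(β⁻¹)) • ψ with hp
  have hpapp : ∀ w : X, p w = -(β⁻¹) * Φ (w, 0) := fun w => rfl
  have hmain : ∀ y, F v + ((p (y - v) : ℝ) : EReal) ≤ F y := by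
    intro y
    rcases eq_or_ne (F y) ⊤ with h | h
    · rw [h]; exact le_top
    · set ry : ℝ := (F y).toReal with hry
      have hFy : F y = ((ry : ℝ) : EReal) := (EReal.coe_toReal h (hFbot y)).symm
      have hmemA : (y - v, ry - rv) ∈ Aset := by
        simp only [hAset, Set.mem_setOf_eq]
        rw [show v + (y - v) = y by abel, hFy, show rv + (ry - rv) = ry by ring]
      have h1 := hAu _ hmemA
      rw [hsplit (y - v) (ry - rv)] at h1
      have h2 : 0 ≤ Φ (y - v, 0) + (ry - rv) * β := le_trans hu_nonneg h1
      have h3 : rv + p (y - v) ≤ ry := by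
        rw [hpapp]
        have hbinv : 0 < β⁻¹ := inv_pos.mpr hβpos
        generalize hcc : Φ (y - v, 0) = cc at h2 ⊢
        have h4 : β⁻¹ * 0 ≤ β⁻¹ * (cc + (ry - rv) * β) :=
          mul_le_mul_of_nonneg_left h2 hbinv.le
        have h5 : β⁻¹ * (cc + (ry - rv) * β) = β⁻¹ * cc + (ry - rv) := by
          field_simp
        rw [mul_zero, h5] at h4
        linarith
      rw [hFv, hFy, ← EReal.coe_add]
      exact_mod_cast h3
  -- transfer subgradient from F to g
  refine ⟨v, p + φ i0, ?_, hdist⟩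
  have hgv : g v = ((rv + (φ i0 v + r i0) : ℝ) : EReal) := by
    rw [hgF v, hFv, ← EReal.coe_add]
  refine ⟨by rw [hgv]; exact EReal.coe_ne_top _, by rw [hgv]; exact EReal.coe_ne_bot _, ?_⟩
  intro y
  have h1 := hmain y
  have h2 : F v + ((p (y - v) : ℝ) : EReal) + ((φ i0 y + r i0 : ℝ) : EReal)
      ≤ F y + ((φ i0 y + r i0 : ℝ) : EReal) := add_le_add h1 le_rfl
  rw [← hgF y] at h2
  refine le_trans (le_of_eq ?_) h2
  rw [hgv, hFv, ← EReal.coe_add, ← EReal.coe_add, ← EReal.coe_add]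
  norm_cast
  simp only [ContinuousLinearMap.add_apply, map_sub]
  ring

theorem subdiffDom_dense_in_dom {X : Type*} [NormedAddCommGroup X] [NormedSpace ℝ X] [CompleteSpace X]
    (f : X → EReal) (hbot : ∀ x, f x ≠ ⊥)
    (hmax : MaxMonotoneSet (graphSub f)) :
    {x | f x ≠ ⊤} ⊆ closure (subdiffDom f) := by
  intro x0 hx0
  simp only [Set.mem_setOf_eq] at hx0
  -- the graph is nonempty
  have hne : (graphSub f).Nonempty := by
    by_contra h
    rw [Set.not_nonempty_iff_eq_empty] at h
    have hmono : MonotoneSet ({((0 : X), (0 : X →L[ℝ] ℝ))} : Set (X × (X →L[ℝ] ℝ))) := by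
      rintro a ha b hb
      simp only [Set.mem_singleton_iff] at ha hb
      subst ha; subst hb
      simp
    have heq := hmax.2 _ hmono (by rw [h]; exact Set.empty_subset _)
    have : ((0 : X), (0 : X →L[ℝ] ℝ)) ∈ graphSub f := by
      rw [← heq]; exact Set.mem_singleton _
    rw [h] at this
    exact this
  haveI : Nonempty ↥(graphSub f) := hne.to_subtype
  set φ : ↥(graphSub f) → X →L[ℝ] ℝ := fun q => q.val.2 with hφ
  set r : ↥(graphSub f) → ℝ := fun q => (f q.val.1).toReal - q.val.2 q.val.1 with hr
  set g : X → EReal := fun y => ⨆ q, ((φ q y + r q : ℝ) : EReal) with hgdef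
  have hterm : ∀ (q : ↥(graphSub f)) (y : X),
      ((φ q y + r q : ℝ) : EReal) = f q.val.1 + ((q.val.2 (y - q.val.1) : ℝ) : EReal) := by
    intro q y
    obtain ⟨hq1, hq2, _⟩ := q.prop
    have hcoe : f q.val.1 = (((f q.val.1).toReal : ℝ) : EReal) := (EReal.coe_toReal hq1 hq2).symm
    rw [hcoe, ← EReal.coe_add, map_sub]
    norm_cast
    simp only [hφ, hr]
    ring
  have hg_le : ∀ y, g y ≤ f y := by
    intro y
    refine iSup_le fun q => ?_
    rw [hterm q y]
    exact q.prop.2.2 y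
  have hsub : graphSub f ⊆ graphSub g := by
    rintro ⟨a, s⟩ hq
    set q : ↥(graphSub f) := ⟨(a, s), hq⟩ with hqdef
    have hga_ge : f a ≤ g a := by
      have h1 := le_iSup (fun q => ((φ q a + r q : ℝ) : EReal)) q
      rw [hterm q a] at h1
      have e : (q.val.2 (a - q.val.1) : ℝ) = 0 := by show s (a - a) = 0; simp
      rw [e, EReal.coe_zero, add_zero] at h1
      exact h1
    have hga : g a = f a := le_antisymm (hg_le a) hga_ge
    refine ⟨by rw [hga]; exact hq.1, by rw [hga]; exact hq.2.1, ?_⟩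
    intro y
    rw [hga]
    have h1 := le_iSup (fun q => ((φ q y + r q : ℝ) : EReal)) q
    rw [hterm q y] at h1
    exact h1
  have hmono_g : MonotoneSet (graphSub g) := by
    rintro ⟨a, s⟩ ha ⟨b, t⟩ hb
    obtain ⟨hat, habot, hale⟩ := ha
    obtain ⟨hbt, hbbot, hble⟩ := hb
    set ra : ℝ := (g a).toReal with hra
    set rb : ℝ := (g b).toReal with hrb
    have hga : g a = ((ra : ℝ) : EReal) := (EReal.coe_toReal hat habot).symm
    have hgb : g b = ((rb : ℝ) : EReal) := (EReal.coe_toReal hbt hbbot).symm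
    have h1 := hale b
    have h2 := hble a
    rw [hga, hgb, ← EReal.coe_add] at h1 h2
    rw [EReal.coe_le_coe_iff] at h1 h2
    simp only []
    have e1 : s (b - a) = s b - s a := map_sub s b a
    have e2 : t (a - b) = t a - t b := map_sub t a b
    have e3 : s (a - b) = s a - s b := map_sub s a b
    have e4 : t (a - b) = t a - t b := map_sub t a b
    rw [e3, e4]
    rw [e1] at h1; rw [e2] at h2
    linarith
  have hGeq : graphSub g = graphSub f := hmax.2 _ hmono_g hsub
  have hgx0 : g x0 ≠ ⊤ := ne_top_of_le_ne_top hx0 (hg_le x0)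
  rw [Metric.mem_closure_iff]
  intro δ hδ
  obtain ⟨v, p, hvp, hdist⟩ :=
    sup_affine_subdiff_dense φ r g (fun _ => rfl) x0 hgx0 δ hδ
  refine ⟨v, ?_, hdist⟩
  have : ((v, p) : X × (X →L[ℝ] ℝ)) ∈ graphSub f := by rw [← hGeq]; exact hvp
  exact ⟨p, this⟩
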